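/- Let δ : ℕ → ℝ be a sequence with δ_n ≥ 0 for all n ≥ 1, and suppose there is a constant C > 0 such that ( Σ_{k=1}^{n} δ_k )² ≤ C · n · δ_n for all n ≥ 1. Then δ_n = 0 for all n ≥ 1. -/

import Mathlib

/-- If `δ_n ≥ 0` and `(Σ_{k=1}^n δ_k)² ≤ C n δ_n` for all `n ≥ 1` with some
constant `C > 0`, then `δ_n = 0` for all `n ≥ 1`. -/
theorem harmonic_divergence_argument (δ : ℕ → ℝ) (hδ : ∀ n, 1 ≤ n → 0 ≤ δ n)
    (C : ℝ) (hC : 0 < C)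
    (h : ∀ n, 1 ≤ n → (∑ k ∈ Finset.Icc 1 n, δ k) ^ 2 ≤ C * n * δ n) :
    ∀ n, 1 ≤ n → δ n = 0 := by
  intro n₀ hn₀
  by_contra hne
  have hpos : 0 < δ n₀ := lt_of_le_of_ne (hδ n₀ hn₀) (Ne.symm hne)
  set S : ℕ → ℝ := fun n => ∑ k ∈ Finset.Icc 1 n, δ k with hS
  have hmono : ∀ m n : ℕ, m ≤ n → S m ≤ S n := by
    intro m n hmn
    apply Finset.sum_le_sum_of_subset_of_nonneg
    · exact Finset.Icc_subset_Icc_right hmn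
    · intro i hi _
      exact hδ i (Finset.mem_Icc.mp hi).1
  have hSpos : ∀ m : ℕ, n₀ ≤ m → 0 < S m := by
    intro m hm
    have h1 : δ n₀ ≤ S n₀ := by
      apply Finset.single_le_sum (fun i hi => hδ i (Finset.mem_Icc.mp hi).1)
      exact Finset.mem_Icc.mpr ⟨hn₀, le_refl n₀⟩
    have := hmono n₀ m hm
    linarith
  have hstep : ∀ n : ℕ, 1 ≤ n → S (n + 1) = S n + δ (n + 1) := by
    intro n hn
    exact Finset.sum_Icc_succ_top (by omega) δ
  -- key inequality
  have hkey : ∀ i : ℕ, 1 / (C * (n₀ + i + 1)) ≤ 1 / S (n₀ + i) - 1 / S (n₀ + i + 1) := by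
    intro i
    set n := n₀ + i + 1 with hn
    have hP1 : 0 < S (n₀ + i) := hSpos _ (by omega)
    have hP2 : 0 < S n := hSpos _ (by omega)
    have hδn : δ n = S n - S (n₀ + i) := by
      have := hstep (n₀ + i) (by omega)
      rw [hn]; linarith
    have hh : S n ^ 2 ≤ C * n * (S n - S (n₀ + i)) := by
      have := h n (by omega)
      rw [hδn] at this
      exact this
    have hle : S (n₀ + i) * S n ≤ S n ^ 2 := by
      have := hmono (n₀ + i) n (by omega)
      nlinarith
    have hCn : (0:ℝ) < C * n := by
      have : (0:ℝ) < (n:ℝ) := by positivity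
      positivity
    have heq : 1 / S (n₀ + i) - 1 / S n = (S n - S (n₀ + i)) / (S (n₀ + i) * S n) := by
      field_simp
    have hcn : C * ((n₀:ℝ) + i + 1) = C * (n:ℕ) := by rw [hn]; push_cast; ring
    rw [heq, hcn, div_le_div_iff₀ hCn (by positivity)]
    nlinarith
  -- telescoping bound
  have hbound : ∀ m : ℕ, ∑ i ∈ Finset.range m, 1 / ((n₀ + i + 1 : ℕ) : ℝ) ≤ C / S n₀ := by
    intro m
    have htel : ∑ i ∈ Finset.range m, (1 / S (n₀ + i) - 1 / S (n₀ + i + 1))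
        = 1 / S n₀ - 1 / S (n₀ + m) := by
      have := Finset.sum_range_sub' (fun i => 1 / S (n₀ + i)) m
      simpa [add_assoc] using this
    have h1 : ∑ i ∈ Finset.range m, 1 / (C * (n₀ + i + 1)) ≤ 1 / S n₀ - 1 / S (n₀ + m) := by
      rw [← htel]
      exact Finset.sum_le_sum fun i _ => hkey i
    have h2 : (0:ℝ) < S (n₀ + m) := hSpos _ (by omega)
    have h3 : ∑ i ∈ Finset.range m, 1 / (C * (n₀ + i + 1)) ≤ 1 / S n₀ := by
      have : 0 < 1 / S (n₀ + m) := by positivity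
      linarith
    have h4 : ∑ i ∈ Finset.range m, 1 / (C * ((n₀:ℝ) + i + 1))
        = (1 / C) * ∑ i ∈ Finset.range m, 1 / ((n₀ + i + 1 : ℕ) : ℝ) := by
      rw [Finset.mul_sum]
      apply Finset.sum_congr rfl
      intro i _
      push_cast
      rw [one_div_mul_eq_div, div_div]
      ring_nf
    rw [h4] at h3
    calc ∑ i ∈ Finset.range m, 1 / ((n₀ + i + 1 : ℕ) : ℝ)
        = C * ((1/C) * ∑ i ∈ Finset.range m, 1 / ((n₀ + i + 1 : ℕ) : ℝ)) := by
          field_simp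
      _ ≤ C * (1 / S n₀) := by
          apply mul_le_mul_of_nonneg_left h3 hC.le
      _ = C / S n₀ := by ring
  -- harmonic divergence
  have hdiv := Real.tendsto_sum_range_one_div_nat_succ_atTop
  have hB := hdiv.eventually_gt_atTop
    ((∑ i ∈ Finset.range n₀, 1 / ((i:ℝ) + 1)) + C / S n₀)
  obtain ⟨N, hN⟩ := Filter.eventually_atTop.mp hB
  have hgt := hN (n₀ + N) (by omega)
  have hsplit : ∑ i ∈ Finset.range (n₀ + N), (1 / ((i:ℝ) + 1))
      = ∑ i ∈ Finset.range n₀, (1 / ((i:ℝ) + 1))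
        + ∑ i ∈ Finset.range N, 1 / ((n₀ + i + 1 : ℕ) : ℝ) := by
    rw [Finset.sum_range_add]
    congr 1
    apply Finset.sum_congr rfl
    intro i _
    push_cast
    ring
  have := hbound N
  rw [hsplit] at hgt
  linarith
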